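/- Let P be a Markov kernel on a measurable space E and g : E → ℝ bounded measurable, with MPE operator T. For bounded measurable f : E → ℝ and x ∈ E define the Esscher transform probability measure μ_{(x,f)}(B) := (∫_B e^{f(z)} P(x,dz)) / (∫_E e^{f(z)} P(x,dz)). Then for all bounded measurable f₁, f₂ : E → ℝ: ‖Tf₁ − Tf₂‖_sp ≤ ‖f₁ − f₂‖_sp · sup_{x,x'∈E} ‖μ_{(x,f₁)} − μ_{(x',f₂)}‖_var, where for probability measures μ₁, μ₂ the total variation distance is ‖μ₁ − μ₂‖_var := sup_B |μ₁(B) − μ₂(B)| over measurable sets B. -/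

import Mathlib

open MeasureTheory ProbabilityTheory

/-- The span seminorm `‖f‖_sp = (sup f - inf f)/2`. -/
noncomputable def spanSeminorm {E : Type*} (f : E → ℝ) : ℝ :=
  ((⨆ x, f x) - ⨅ x, f x) / 2

/-- The multiplicative Poisson equation (MPE) operator
`(T f)(x) = g(x) + log ∫ exp (f y) P(x, dy)`. -/
noncomputable def mpeOp {E : Type*} [MeasurableSpace E] (P : Kernel E E) (g : E → ℝ)
    (f : E → ℝ) : E → ℝ :=
  fun x => g x + Real.log (∫ y, Real.exp (f y) ∂(P x))

/-- The Esscher transform measure of the set `B`: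
`μ_{(x,f)}(B) = (∫_B e^{f} dP(x,·)) / (∫_E e^{f} dP(x,·))`. -/
noncomputable def esscher {E : Type*} [MeasurableSpace E] (P : Kernel E E) (f : E → ℝ)
    (x : E) (B : Set E) : ℝ :=
  (∫ z in B, Real.exp (f z) ∂(P x)) / ∫ z, Real.exp (f z) ∂(P x)

section Aux

open Set
open scoped ENNReal NNReal

variable {E : Type*} [MeasurableSpace E]

lemma mpeAux.integrable_of_abs_le {μ : Measure E} [IsFiniteMeasure μ] {h : E → ℝ}
    (hm : Measurable h) {C : ℝ} (hb : ∀ x, |h x| ≤ C) : Integrable h μ :=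
  Integrable.mono' (integrable_const C) hm.aestronglyMeasurable
    (Filter.Eventually.of_forall fun x => by simpa [Real.norm_eq_abs] using hb x)

/-- TV bound: `∫ h dμ - ∫ h dν ≤ (M - m) * S`. -/
lemma mpeAux.integral_sub_le_tv (μ ν : Measure E) [IsProbabilityMeasure μ]
    [IsProbabilityMeasure ν]
    (h : E → ℝ) (hm : Measurable h) (m M : ℝ) (hlb : ∀ x, m ≤ h x) (hub : ∀ x, h x ≤ M)
    (hmM : m ≤ M) (S : ℝ) (hS0 : 0 ≤ S)
    (hS : ∀ B : Set E, MeasurableSet B → |(μ B).toReal - (ν B).toReal| ≤ S) :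
    ∫ z, h z ∂μ - ∫ z, h z ∂ν ≤ (M - m) * S := by
  set k : E → ℝ := fun z => h z - m with hk
  have hkm : Measurable k := hm.sub measurable_const
  have hkb : ∀ x, |k x| ≤ M - m := fun x => by
    simp only [hk]
    exact abs_le.2 ⟨by linarith [hlb x, hub x], by linarith [hub x]⟩
  have hknn : ∀ x, 0 ≤ k x := fun x => by
    simp only [hk, sub_nonneg]; exact hlb x
  have hki : ∀ (ρ : Measure E) [IsProbabilityMeasure ρ], Integrable k ρ := fun ρ _ =>
    mpeAux.integrable_of_abs_le hkm hkb
  have hdiff : ∫ z, h z ∂μ - ∫ z, h z ∂ν = ∫ z, k z ∂μ - ∫ z, k z ∂ν := by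
    have hhb : ∀ x, |h x| ≤ max |m| |M| := fun x => abs_le.2
      ⟨by linarith [neg_abs_le m, le_max_left |m| |M|, hlb x],
       by linarith [le_abs_self M, le_max_right |m| |M|, hub x]⟩
    have h1 : ∫ z, k z ∂μ = ∫ z, h z ∂μ - m := by
      rw [hk, integral_sub (mpeAux.integrable_of_abs_le hm hhb) (integrable_const m)]
      simp
    have h2 : ∫ z, k z ∂ν = ∫ z, h z ∂ν - m := by
      rw [hk, integral_sub (mpeAux.integrable_of_abs_le hm hhb) (integrable_const m)]
      simp
    rw [h1, h2]; ring
  rw [hdiff]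
  have layer : ∀ (ρ : Measure E) [IsProbabilityMeasure ρ],
      ∫ z, k z ∂ρ = ∫ t in Set.Ioi (0:ℝ), (ρ {a | t < k a}).toReal := fun ρ _ =>
    (hki ρ).integral_eq_integral_meas_lt (Filter.Eventually.of_forall hknn)
  rw [layer μ, layer ν]
  set Gμ : ℝ → ℝ := fun t => (μ {a | t < k a}).toReal with hGμ
  set Gν : ℝ → ℝ := fun t => (ν {a | t < k a}).toReal with hGν
  have hmeasG : ∀ (ρ : Measure E), Measurable fun t : ℝ => (ρ {a | t < k a}).toReal := fun ρ =>
    Measurable.ennreal_toReal (Antitone.measurable fun _ _ hst => measure_mono fun _ hx =>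
      lt_of_le_of_lt hst hx)
  have hGbd : ∀ (ρ : Measure E) [IsProbabilityMeasure ρ] (t : ℝ),
      (ρ {a | t < k a}).toReal ≤ 1 := by
    intro ρ _ t
    exact ENNReal.toReal_le_of_le_ofReal one_pos.le (by simpa using prob_le_one)
  have hGzero : ∀ (ρ : Measure E) (t : ℝ), M - m ≤ t → (ρ {a | t < k a}).toReal = 0 := by
    intro ρ t ht
    have : {a | t < k a} = ∅ := by
      ext a; simp only [Set.mem_setOf_eq, Set.mem_empty_iff_false, iff_false, not_lt]
      calc k a ≤ M - m := (abs_le.1 (hkb a)).2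
        _ ≤ t := ht
    simp [this]
  have hintG : ∀ (ρ : Measure E) [IsProbabilityMeasure ρ],
      IntegrableOn (fun t : ℝ => (ρ {a | t < k a}).toReal) (Set.Ioi 0) := by
    intro ρ _
    refine Integrable.mono' (g := (Set.Ioc (0:ℝ) (M-m)).indicator fun _ => (1:ℝ)) ?_
      (hmeasG ρ).aestronglyMeasurable ?_
    · exact (integrable_indicator_iff measurableSet_Ioc).2
        (integrableOn_const measure_Ioc_lt_top.ne)
    · refine (ae_restrict_iff' measurableSet_Ioi).2 (Filter.Eventually.of_forall fun t ht => ?_)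
      rw [Real.norm_eq_abs, abs_of_nonneg ENNReal.toReal_nonneg]
      by_cases hcase : t ≤ M - m
      · rw [Set.indicator_of_mem (Set.mem_Ioc.2 ⟨ht, hcase⟩)]
        exact hGbd ρ t
      · rw [Set.indicator_of_notMem (fun hmem => hcase hmem.2), hGzero ρ t (le_of_not_ge hcase)]
  rw [← integral_sub (hintG μ) (hintG ν)]
  have hle : ∫ t in Set.Ioi (0:ℝ), (Gμ t - Gν t)
      ≤ ∫ t in Set.Ioi (0:ℝ), (Set.Ioc (0:ℝ) (M-m)).indicator (fun _ => S) t := by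
    refine integral_mono_ae ((hintG μ).sub (hintG ν)) ?_ ?_
    · exact (integrable_indicator_iff measurableSet_Ioc).2
        (integrableOn_const measure_Ioc_lt_top.ne)
    · refine (ae_restrict_iff' measurableSet_Ioi).2 (Filter.Eventually.of_forall fun t ht => ?_)
      by_cases hcase : t ≤ M - m
      · rw [Set.indicator_of_mem (Set.mem_Ioc.2 ⟨ht, hcase⟩)]
        exact (le_abs_self _).trans (hS {a | t < k a} (hkm measurableSet_Ioi))
      · rw [Set.indicator_of_notMem (fun hmem => hcase hmem.2)]
        simp only [hGμ, hGν, hGzero μ t (le_of_not_ge hcase), hGzero ν t (le_of_not_ge hcase),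
          sub_zero, le_refl]
  calc ∫ t in Set.Ioi (0:ℝ), (Gμ t - Gν t) ≤ _ := hle
    _ ≤ (M - m) * S := by
      rw [integral_indicator_const _ measurableSet_Ioc]
      rw [measureReal_def, Measure.restrict_apply measurableSet_Ioc,
        Set.inter_eq_self_of_subset_left (Set.Ioc_subset_Ioi_self), Real.volume_Ioc]
      simp only [smul_eq_mul, sub_zero]
      rw [ENNReal.toReal_ofReal (by linarith)]

/-- The Esscher transform as a measure. -/
noncomputable def mpeAux.eMeas (P : Kernel E E) (f : E → ℝ) (x : E) : Measure E :=
  (ENNReal.ofReal (∫ z, Real.exp (f z) ∂(P x)))⁻¹ •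
    ((P x).withDensity fun z => ENNReal.ofReal (Real.exp (f z)))

namespace mpeAux

variable (P : Kernel E E) [IsMarkovKernel P] {f : E → ℝ} {C : ℝ}

lemma expInt (hf : Measurable f) (hb : ∀ x, |f x| ≤ C) (x : E) :
    Integrable (fun z => Real.exp (f z)) (P x) :=
  mpeAux.integrable_of_abs_le (Real.measurable_exp.comp hf)
    (C := Real.exp C) fun z => by
      rw [abs_of_pos (Real.exp_pos _)]
      exact Real.exp_le_exp.2 ((le_abs_self _).trans (hb z))

lemma Zpos (hf : Measurable f) (hb : ∀ x, |f x| ≤ C) (x : E) :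
    0 < ∫ z, Real.exp (f z) ∂(P x) :=
  integral_exp_pos (expInt P hf hb x)

lemma Zle (hf : Measurable f) (hb : ∀ x, |f x| ≤ C) (x : E) :
    ∫ z, Real.exp (f z) ∂(P x) ≤ Real.exp C := by
  calc ∫ z, Real.exp (f z) ∂(P x) ≤ ∫ _, Real.exp C ∂(P x) :=
        integral_mono (expInt P hf hb x) (integrable_const _)
          (fun z => Real.exp_le_exp.2 ((le_abs_self _).trans (hb z)))
    _ = Real.exp C := by simp
    _ ≤ Real.exp C := le_refl _

lemma Zge (hf : Measurable f) (hb : ∀ x, |f x| ≤ C) (x : E) :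
    Real.exp (-C) ≤ ∫ z, Real.exp (f z) ∂(P x) := by
  calc Real.exp (-C) = ∫ _, Real.exp (-C) ∂(P x) := by simp
    _ ≤ ∫ z, Real.exp (f z) ∂(P x) :=
        integral_mono (integrable_const _) (expInt P hf hb x)
          (fun z => Real.exp_le_exp.2 (by linarith [abs_le.1 (hb z)]))

lemma abs_log_Z_le (hf : Measurable f) (hb : ∀ x, |f x| ≤ C) (x : E) :
    |Real.log (∫ z, Real.exp (f z) ∂(P x))| ≤ C := by
  have hpos := Zpos P hf hb x
  refine abs_le.2 ⟨?_, ?_⟩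
  · rw [← Real.log_exp (-C)]
    exact Real.log_le_log (Real.exp_pos _) (Zge P hf hb x)
  · rw [← Real.log_exp C]
    exact Real.log_le_log hpos (Zle P hf hb x)

lemma eMeas_isProb (hf : Measurable f) (hb : ∀ x, |f x| ≤ C) (x : E) :
    IsProbabilityMeasure (eMeas P f x) := by
  constructor
  have hZ := Zpos P hf hb x
  rw [eMeas, Measure.smul_apply, withDensity_apply _ MeasurableSet.univ, smul_eq_mul,
    Measure.restrict_univ]
  rw [← ofReal_integral_eq_lintegral_ofReal (expInt P hf hb x)
    (Filter.Eventually.of_forall fun z => (Real.exp_pos _).le)]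
  exact ENNReal.inv_mul_cancel (by simpa using hZ) ENNReal.ofReal_ne_top

lemma eMeas_apply (hf : Measurable f) (hb : ∀ x, |f x| ≤ C) (x : E) {B : Set E}
    (hB : MeasurableSet B) :
    ((eMeas P f x) B).toReal = esscher P f x B := by
  have hZ := Zpos P hf hb x
  rw [eMeas, Measure.smul_apply, withDensity_apply _ hB, smul_eq_mul,
    ← ofReal_integral_eq_lintegral_ofReal ((expInt P hf hb x).restrict)
      (Filter.Eventually.of_forall fun z => (Real.exp_pos _).le),
    ENNReal.toReal_mul, ENNReal.toReal_inv, ENNReal.toReal_ofReal hZ.le,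
    ENNReal.toReal_ofReal (setIntegral_nonneg hB fun z _ => (Real.exp_pos _).le)]
  rw [esscher, div_eq_inv_mul]

lemma eMeas_integral (hf : Measurable f) (hb : ∀ x, |f x| ≤ C) (x : E) (h : E → ℝ) :
    ∫ z, h z ∂(eMeas P f x)
      = (∫ z, h z * Real.exp (f z) ∂(P x)) / ∫ z, Real.exp (f z) ∂(P x) := by
  have hZ := Zpos P hf hb x
  rw [eMeas, integral_smul_measure]
  have hd : ((P x).withDensity fun z => ENNReal.ofReal (Real.exp (f z)))
      = (P x).withDensity (fun z => ((Real.exp (f z)).toNNReal : ℝ≥0∞)) := rfl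
  rw [hd, integral_withDensity_eq_integral_smul (hf.exp.real_toNNReal)]
  simp only [NNReal.smul_def, smul_eq_mul]
  rw [ENNReal.toReal_inv, ENNReal.toReal_ofReal hZ.le]
  rw [div_eq_inv_mul]
  congr 1
  apply integral_congr_ae
  refine Filter.Eventually.of_forall fun z => ?_
  simp only []
  rw [Real.coe_toNNReal _ (Real.exp_pos _).le, mul_comm]

/-- Jensen step: `∫ (f₂ - f₁) dμ_{(x,f₁)} ≤ log Z₂ - log Z₁`. -/
lemma jensen_step {f₁ f₂ : E → ℝ} (hf₁ : Measurable f₁) (hf₂ : Measurable f₂)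
    {C₁ C₂ : ℝ} (hb₁ : ∀ z, |f₁ z| ≤ C₁) (hb₂ : ∀ z, |f₂ z| ≤ C₂) (x : E) :
    ∫ z, (f₂ z - f₁ z) ∂(eMeas P f₁ x)
      ≤ Real.log (∫ z, Real.exp (f₂ z) ∂(P x))
        - Real.log (∫ z, Real.exp (f₁ z) ∂(P x)) := by
  haveI := eMeas_isProb P hf₁ hb₁ x
  have hZ₁ := Zpos P hf₁ hb₁ x
  have hZ₂ := Zpos P hf₂ hb₂ x
  set μ := eMeas P f₁ x with hμ
  set φ : E → ℝ := fun z => f₂ z - f₁ z with hφ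
  have hφm : Measurable φ := hf₂.sub hf₁
  have hφb : ∀ z, |φ z| ≤ C₁ + C₂ := fun z => by
    simp only [hφ]
    exact abs_le.2 ⟨by linarith [abs_le.1 (hb₁ z), abs_le.1 (hb₂ z)],
      by linarith [abs_le.1 (hb₁ z), abs_le.1 (hb₂ z)]⟩
  have hφi : Integrable φ μ := mpeAux.integrable_of_abs_le hφm hφb
  set c := ∫ z, φ z ∂μ with hcdef
  have hc : |c| ≤ C₁ + C₂ := by
    have := norm_integral_le_of_norm_le_const (μ := μ) (C := C₁ + C₂) (f := φ)
      (Filter.Eventually.of_forall fun z => by simpa [Real.norm_eq_abs] using hφb z)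
    simpa [Real.norm_eq_abs, measure_univ] using this
  have hexpInt : Integrable (fun z => Real.exp (φ z - c)) μ := by
    refine mpeAux.integrable_of_abs_le ((hφm.sub measurable_const).exp)
      (C := Real.exp ((C₁ + C₂) + (C₁ + C₂))) fun z => by
        rw [abs_of_pos (Real.exp_pos _)]
        refine Real.exp_le_exp.2 ?_
        have h1 := abs_le.1 (hφb z)
        have h2 := abs_le.1 hc
        linarith
  have h1 : (1:ℝ) ≤ ∫ z, Real.exp (φ z - c) ∂μ := by
    have hφc : Integrable (fun z => φ z - c) μ := hφi.sub (integrable_const c)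
    have heq : ∫ z, (φ z - c + 1) ∂μ = 1 := by
      rw [integral_add hφc (integrable_const 1),
        integral_sub hφi (integrable_const c)]
      simp [← hcdef, measure_univ]
    calc (1:ℝ) = ∫ z, (φ z - c + 1) ∂μ := heq.symm
      _ ≤ ∫ z, Real.exp (φ z - c) ∂μ := by
          refine integral_mono (hφc.add (integrable_const 1))
            hexpInt fun z => ?_
          linarith [Real.add_one_le_exp (φ z - c)]
  have h2 : ∫ z, Real.exp (φ z - c) ∂μ
      = Real.exp (-c) * ((∫ z, Real.exp (f₂ z) ∂(P x)) / (∫ z, Real.exp (f₁ z) ∂(P x))) := by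
    have e1 : ∀ z, Real.exp (φ z - c) = Real.exp (-c) * Real.exp (φ z) := fun z => by
      rw [← Real.exp_add]; ring_nf
    rw [integral_congr_ae (Filter.Eventually.of_forall e1), integral_const_mul]
    congr 1
    rw [hμ, eMeas_integral P hf₁ hb₁ x (fun z => Real.exp (φ z))]
    congr 1
    apply integral_congr_ae
    refine Filter.Eventually.of_forall fun z => ?_
    simp only [hφ]
    rw [← Real.exp_add]
    ring_nf
  have h3 : Real.exp c ≤ (∫ z, Real.exp (f₂ z) ∂(P x)) / (∫ z, Real.exp (f₁ z) ∂(P x)) := by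
    rw [h2, Real.exp_neg] at h1
    have hec := Real.exp_pos c
    calc Real.exp c = Real.exp c * 1 := (mul_one _).symm
      _ ≤ Real.exp c * ((Real.exp c)⁻¹ *
          ((∫ z, Real.exp (f₂ z) ∂(P x)) / (∫ z, Real.exp (f₁ z) ∂(P x)))) :=
          mul_le_mul_of_nonneg_left h1 hec.le
      _ = _ := by field_simp
  calc c ≤ Real.log ((∫ z, Real.exp (f₂ z) ∂(P x)) / (∫ z, Real.exp (f₁ z) ∂(P x))) :=
      (Real.le_log_iff_exp_le (div_pos hZ₂ hZ₁)).2 h3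
    _ = _ := Real.log_div hZ₂.ne' hZ₁.ne'

end mpeAux

end Aux

/-- The span of `Tf₁ - Tf₂` is bounded by the span of `f₁ - f₂` times the supremum over
`x, x'` of the total variation distance between the Esscher transforms `μ_{(x,f₁)}` and
`μ_{(x',f₂)}`. -/
theorem mpe_span_esscher_bound {E : Type*} [MeasurableSpace E]
    (P : Kernel E E) [IsMarkovKernel P]
    (g : E → ℝ) (hg_meas : Measurable g) (Cg : ℝ) (hg_bdd : ∀ x, |g x| ≤ Cg)
    (f₁ f₂ : E → ℝ) (hf₁_meas : Measurable f₁) (hf₂_meas : Measurable f₂)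
    (C₁ : ℝ) (hf₁_bdd : ∀ x, |f₁ x| ≤ C₁) (C₂ : ℝ) (hf₂_bdd : ∀ x, |f₂ x| ≤ C₂) :
    spanSeminorm (fun x => mpeOp P g f₁ x - mpeOp P g f₂ x)
      ≤ spanSeminorm (fun x => f₁ x - f₂ x) *
        ⨆ x : E, ⨆ x' : E, ⨆ B : {B : Set E // MeasurableSet B},
          |esscher P f₁ x B.1 - esscher P f₂ x' B.1| := by
  classical
  rcases isEmpty_or_nonempty E with hE | hE
  · simp [spanSeminorm, iSup_of_empty' , iInf_of_isEmpty, Real.sSup_empty, Real.sInf_empty]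
  obtain ⟨x₀⟩ := hE
  haveI : Nonempty E := ⟨x₀⟩
  set d : E → ℝ := fun x => f₁ x - f₂ x with hd
  have hd_meas : Measurable d := hf₁_meas.sub hf₂_meas
  have hd_bdd : ∀ x, |d x| ≤ C₁ + C₂ := fun x => by
    simp only [hd]
    exact abs_le.2 ⟨by linarith [abs_le.1 (hf₁_bdd x), abs_le.1 (hf₂_bdd x)],
      by linarith [abs_le.1 (hf₁_bdd x), abs_le.1 (hf₂_bdd x)]⟩
  have hdba : BddAbove (Set.range d) :=
    ⟨C₁ + C₂, by rintro _ ⟨x, rfl⟩; exact (abs_le.1 (hd_bdd x)).2⟩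
  have hdbb : BddBelow (Set.range d) :=
    ⟨-(C₁ + C₂), by rintro _ ⟨x, rfl⟩; exact (abs_le.1 (hd_bdd x)).1⟩
  set m := ⨅ x, d x with hm
  set M := ⨆ x, d x with hM
  have hlb : ∀ x, m ≤ d x := fun x => ciInf_le hdbb x
  have hub : ∀ x, d x ≤ M := fun x => le_ciSup hdba x
  have hmM : m ≤ M := (hlb x₀).trans (hub x₀)
  -- esscher values are in [0, 1]
  have hess_mem : ∀ (f : E → ℝ) (Cf : ℝ), Measurable f → (∀ z, |f z| ≤ Cf) → ∀ (x : E)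
      (B : Set E), MeasurableSet B → esscher P f x B ∈ Set.Icc (0:ℝ) 1 := by
    intro f Cf hfm hfb x B hB
    have hZ := mpeAux.Zpos P hfm hfb x
    rw [Set.mem_Icc, esscher]
    constructor
    · exact div_nonneg (setIntegral_nonneg hB fun z _ => (Real.exp_pos _).le) hZ.le
    · rw [div_le_one hZ]
      exact setIntegral_le_integral (mpeAux.expInt P hfm hfb x)
        (Filter.Eventually.of_forall fun z => (Real.exp_pos _).le)
  have habs1 : ∀ (x x' : E) (B : {B : Set E // MeasurableSet B}),
      |esscher P f₁ x B.1 - esscher P f₂ x' B.1| ≤ 1 := by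
    intro x x' B
    have h1 := hess_mem f₁ C₁ hf₁_meas hf₁_bdd x B.1 B.2
    have h2 := hess_mem f₂ C₂ hf₂_meas hf₂_bdd x' B.1 B.2
    exact abs_le.2 ⟨by linarith [h1.1, h2.2], by linarith [h1.2, h2.1]⟩
  set S := ⨆ x : E, ⨆ x' : E, ⨆ B : {B : Set E // MeasurableSet B},
      |esscher P f₁ x B.1 - esscher P f₂ x' B.1| with hSdef
  haveI : Nonempty {B : Set E // MeasurableSet B} := ⟨⟨∅, MeasurableSet.empty⟩⟩
  have hle_S : ∀ (x x' : E) (B : {B : Set E // MeasurableSet B}),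
      |esscher P f₁ x B.1 - esscher P f₂ x' B.1| ≤ S := by
    intro x x' B
    have s1 : |esscher P f₁ x B.1 - esscher P f₂ x' B.1|
        ≤ ⨆ B : {B : Set E // MeasurableSet B}, |esscher P f₁ x B.1 - esscher P f₂ x' B.1| :=
      le_ciSup (f := fun B : {B : Set E // MeasurableSet B} =>
          |esscher P f₁ x B.1 - esscher P f₂ x' B.1|)
        ⟨1, by rintro _ ⟨B', rfl⟩; exact habs1 x x' B'⟩ B
    have s2 : (⨆ B : {B : Set E // MeasurableSet B}, |esscher P f₁ x B.1 - esscher P f₂ x' B.1|)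
        ≤ ⨆ x' : E, ⨆ B : {B : Set E // MeasurableSet B},
          |esscher P f₁ x B.1 - esscher P f₂ x' B.1| :=
      le_ciSup (f := fun x' => ⨆ B : {B : Set E // MeasurableSet B},
          |esscher P f₁ x B.1 - esscher P f₂ x' B.1|)
        ⟨1, by rintro _ ⟨y, rfl⟩; exact ciSup_le fun B' => habs1 x y B'⟩ x'
    have s3 : (⨆ x' : E, ⨆ B : {B : Set E // MeasurableSet B},
          |esscher P f₁ x B.1 - esscher P f₂ x' B.1|) ≤ S :=
      le_ciSup (f := fun x => ⨆ x' : E, ⨆ B : {B : Set E // MeasurableSet B},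
          |esscher P f₁ x B.1 - esscher P f₂ x' B.1|)
        ⟨1, by rintro _ ⟨y, rfl⟩; exact ciSup_le fun y' => ciSup_le fun B' => habs1 y y' B'⟩ x
    exact s1.trans (s2.trans s3)
  have hS0 : 0 ≤ S :=
    (abs_nonneg _).trans (hle_S x₀ x₀ ⟨∅, MeasurableSet.empty⟩)
  -- the function F
  set F : E → ℝ := fun x => mpeOp P g f₁ x - mpeOp P g f₂ x with hF
  have hFeq : ∀ x, F x = Real.log (∫ z, Real.exp (f₁ z) ∂(P x))
      - Real.log (∫ z, Real.exp (f₂ z) ∂(P x)) := fun x => by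
    simp only [hF, mpeOp]; ring
  have hFb : ∀ x, |F x| ≤ C₁ + C₂ := fun x => by
    rw [hFeq x]
    have h1 := abs_le.1 (mpeAux.abs_log_Z_le P hf₁_meas hf₁_bdd x)
    have h2 := abs_le.1 (mpeAux.abs_log_Z_le P hf₂_meas hf₂_bdd x)
    exact abs_le.2 ⟨by linarith, by linarith⟩
  -- key oscillation bound
  have key : ∀ x x' : E, F x - F x' ≤ (M - m) * S := by
    intro x x'
    haveI hpμ := mpeAux.eMeas_isProb P hf₁_meas hf₁_bdd x
    haveI hpν := mpeAux.eMeas_isProb P hf₂_meas hf₂_bdd x'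
    have j1 := mpeAux.jensen_step P hf₁_meas hf₂_meas hf₁_bdd hf₂_bdd x
    have j2 := mpeAux.jensen_step P hf₂_meas hf₁_meas hf₂_bdd hf₁_bdd x'
    -- F x ≤ ∫ d dμ_{x,f₁}
    have e1 : F x ≤ ∫ z, d z ∂(mpeAux.eMeas P f₁ x) := by
      have : ∫ z, (f₂ z - f₁ z) ∂(mpeAux.eMeas P f₁ x)
          = - ∫ z, d z ∂(mpeAux.eMeas P f₁ x) := by
        rw [← integral_neg]
        apply integral_congr_ae
        exact Filter.Eventually.of_forall fun z => by simp only [hd]; ring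
      rw [hFeq x]
      rw [this] at j1
      linarith
    have e2 : ∫ z, d z ∂(mpeAux.eMeas P f₂ x') ≤ F x' := by
      rw [hFeq x']
      linarith [j2]
    have etv : ∫ z, d z ∂(mpeAux.eMeas P f₁ x) - ∫ z, d z ∂(mpeAux.eMeas P f₂ x')
        ≤ (M - m) * S := by
      refine mpeAux.integral_sub_le_tv _ _ d hd_meas m M hlb hub hmM S hS0 ?_
      intro B hB
      rw [mpeAux.eMeas_apply P hf₁_meas hf₁_bdd x hB,
        mpeAux.eMeas_apply P hf₂_meas hf₂_bdd x' hB]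
      exact hle_S x x' ⟨B, hB⟩
    linarith
  -- from oscillation bound to span bound
  have hFba : BddAbove (Set.range F) :=
    ⟨C₁ + C₂, by rintro _ ⟨x, rfl⟩; exact (abs_le.1 (hFb x)).2⟩
  have hFbb : BddBelow (Set.range F) :=
    ⟨-(C₁ + C₂), by rintro _ ⟨x, rfl⟩; exact (abs_le.1 (hFb x)).1⟩
  have hsup : (⨆ x, F x) ≤ (⨅ x, F x) + (M - m) * S := by
    refine ciSup_le fun x => ?_
    have : F x - (M - m) * S ≤ ⨅ x', F x' :=
      le_ciInf fun x' => by linarith [key x x']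
    linarith
  have hspanF : spanSeminorm F ≤ ((M - m) * S) / 2 := by
    rw [spanSeminorm]
    have h1 : (⨆ x, F x) - (⨅ x, F x) ≤ (M - m) * S := by linarith
    linarith
  have hspand : spanSeminorm (fun x => f₁ x - f₂ x) = (M - m) / 2 := by
    rw [spanSeminorm, hM, hm]
  calc spanSeminorm F ≤ ((M - m) * S) / 2 := hspanF
    _ = ((M - m) / 2) * S := by ring
    _ = spanSeminorm (fun x => f₁ x - f₂ x) * S := by rw [hspand]
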